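/- Let G be a graph and w a weight function on G. Let 𝒳 be a set of subsets of V(G), none of which is a (w,1/2)-balanced separator, and suppose that for all X, X' ∈ 𝒳 the canonical separations S_{w,G}(X) and S_{w,G}(X') are loosely non-crossing. Then for every connected component D of G \ β(G, w, 𝒳), there exists X ∈ 𝒳 such that D ⊆ A, where (A, C, B) = S_{w,G}(X). -/

import Mathlib

open SimpleGraph

variable {V : Type*}

/-- A hole (induced cycle on at least 4 vertices) given as an embedding of the cycle `ZMod n`. -/
def IsHoleEmb (G : SimpleGraph V) (n : ℕ) (f : ZMod n → V) : Prop :=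
  4 ≤ n ∧ Function.Injective f ∧
    ∀ i j, G.Adj (f i) (f j) ↔ (i = j + 1 ∨ j = i + 1)

/-- `G` contains a clock: a hole `C` together with a vertex not in `C` having two
non-adjacent neighbours in `C`. -/
def ContainsClock (G : SimpleGraph V) : Prop :=
  ∃ (n : ℕ) (f : ZMod n → V) (v : V),
    IsHoleEmb G n f ∧ (∀ i, v ≠ f i) ∧
      ∃ i j, G.Adj v (f i) ∧ G.Adj v (f j) ∧ f i ≠ f j ∧ ¬ G.Adj (f i) (f j)

def ClockFree (G : SimpleGraph V) : Prop := ¬ ContainsClock G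

/-- `G` has no induced diamond (`K₄` minus an edge). -/
def DiamondFree (G : SimpleGraph V) : Prop :=
  ¬ ∃ a b c d : V, a ≠ b ∧ a ≠ c ∧ a ≠ d ∧ b ≠ c ∧ b ≠ d ∧ c ≠ d ∧
    G.Adj a b ∧ G.Adj a c ∧ G.Adj a d ∧ G.Adj b c ∧ G.Adj b d ∧ ¬ G.Adj c d

/-- `X` is a cutset of `G`: removing `X` leaves a non-empty disconnected graph. -/
def IsCutset (G : SimpleGraph V) (X : Set V) : Prop :=
  (Xᶜ : Set V).Nonempty ∧ ¬ (G.induce (Xᶜ : Set V)).Connected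

def HasStarCutset (G : SimpleGraph V) : Prop :=
  ∃ X : Set V, IsCutset G X ∧ ∃ x ∈ X, ∀ y ∈ X, y = x ∨ G.Adj x y

def HasCliqueCutset (G : SimpleGraph V) : Prop :=
  ∃ X : Set V, IsCutset G X ∧ G.IsClique X

/-- `X` separates `Y` from `Z`: every path with one end in `Y` and the other in `Z`
contains a vertex of `X`. -/
def Separates (G : SimpleGraph V) (X Y Z : Set V) : Prop :=
  ∀ y ∈ Y, ∀ z ∈ Z, ∀ p : G.Walk y z, p.IsPath → ∃ x ∈ X, x ∈ p.support

def IsClawCenter (G : SimpleGraph V) (v : V) : Prop :=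
  ∃ x y z, G.Adj v x ∧ G.Adj v y ∧ G.Adj v z ∧ x ≠ y ∧ x ≠ z ∧ y ≠ z ∧
    ¬ G.Adj x y ∧ ¬ G.Adj x z ∧ ¬ G.Adj y z

/-- An induced path on `n+1` vertices given as a function from `Fin (n+1)`. -/
def IsPathEmb (G : SimpleGraph V) (n : ℕ) (f : Fin (n+1) → V) : Prop :=
  Function.Injective f ∧
    ∀ i j, G.Adj (f i) (f j) ↔ ((i : ℕ) + 1 = (j : ℕ) ∨ (j : ℕ) + 1 = (i : ℕ))

/-- Cross conditions between two paths of a pyramid sharing only the apex (index 0):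
off-apex parts are disjoint and the only possible edge joins the two far ends. -/
def PyrNoCross (G : SimpleGraph V) {n m : ℕ} (f : Fin (n+1) → V) (g : Fin (m+1) → V) : Prop :=
  ∀ i j, i ≠ 0 → j ≠ 0 →
    f i ≠ g j ∧ (G.Adj (f i) (g j) → i = Fin.last n ∧ j = Fin.last m)

/-- Cross conditions between two paths of a theta: the interiors are disjoint and
anticomplete. -/
def ThetaNoCross (G : SimpleGraph V) {n m : ℕ} (f : Fin (n+1) → V) (g : Fin (m+1) → V) : Prop :=
  ∀ i j, i ≠ 0 → i ≠ Fin.last n → j ≠ 0 → j ≠ Fin.last m →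
    f i ≠ g j ∧ ¬ G.Adj (f i) (g j)

/-- Cross conditions between two paths of a prism: they are disjoint and the only
edges join the two first ends or the two last ends. -/
def PrismNoCross (G : SimpleGraph V) {n m : ℕ} (f : Fin (n+1) → V) (g : Fin (m+1) → V) : Prop :=
  ∀ i j, f i ≠ g j ∧
    (G.Adj (f i) (g j) → (i = 0 ∧ j = 0) ∨ (i = Fin.last n ∧ j = Fin.last m))

/-- A pyramid with apex `a`, given by three induced paths from `a` to a triangle. -/
def PyramidSpec (G : SimpleGraph V) (a : V) (n₁ n₂ n₃ : ℕ)
    (f₁ : Fin (n₁+1) → V) (f₂ : Fin (n₂+1) → V) (f₃ : Fin (n₃+1) → V) : Prop :=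
  IsPathEmb G n₁ f₁ ∧ IsPathEmb G n₂ f₂ ∧ IsPathEmb G n₃ f₃ ∧
  f₁ 0 = a ∧ f₂ 0 = a ∧ f₃ 0 = a ∧
  1 ≤ n₁ ∧ 1 ≤ n₂ ∧ 1 ≤ n₃ ∧
  G.Adj (f₁ (Fin.last n₁)) (f₂ (Fin.last n₂)) ∧
  G.Adj (f₂ (Fin.last n₂)) (f₃ (Fin.last n₃)) ∧
  G.Adj (f₁ (Fin.last n₁)) (f₃ (Fin.last n₃)) ∧
  ¬(n₁ = 1 ∧ n₂ = 1) ∧ ¬(n₁ = 1 ∧ n₃ = 1) ∧ ¬(n₂ = 1 ∧ n₃ = 1) ∧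
  PyrNoCross G f₁ f₂ ∧ PyrNoCross G f₁ f₃ ∧ PyrNoCross G f₂ f₃

def IsPyramidWithApex (G : SimpleGraph V) (Q : Set V) (a : V) : Prop :=
  ∃ (n₁ n₂ n₃ : ℕ) (f₁ : Fin (n₁+1) → V) (f₂ : Fin (n₂+1) → V) (f₃ : Fin (n₃+1) → V),
    PyramidSpec G a n₁ n₂ n₃ f₁ f₂ f₃ ∧
    Q = Set.range f₁ ∪ Set.range f₂ ∪ Set.range f₃

/-- A short pyramid: a pyramid one of whose paths has length exactly one. -/
def IsShortPyramidWithApex (G : SimpleGraph V) (Q : Set V) (a : V) : Prop :=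
  ∃ (n₁ n₂ n₃ : ℕ) (f₁ : Fin (n₁+1) → V) (f₂ : Fin (n₂+1) → V) (f₃ : Fin (n₃+1) → V),
    PyramidSpec G a n₁ n₂ n₃ f₁ f₂ f₃ ∧ (n₁ = 1 ∨ n₂ = 1 ∨ n₃ = 1) ∧
    Q = Set.range f₁ ∪ Set.range f₂ ∪ Set.range f₃

/-- A theta with ends `a, b`, given by three induced paths from `a` to `b` with
pairwise disjoint, pairwise anticomplete interiors. -/
def ThetaSpec (G : SimpleGraph V) (a b : V) (n₁ n₂ n₃ : ℕ)
    (f₁ : Fin (n₁+1) → V) (f₂ : Fin (n₂+1) → V) (f₃ : Fin (n₃+1) → V) : Prop :=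
  IsPathEmb G n₁ f₁ ∧ IsPathEmb G n₂ f₂ ∧ IsPathEmb G n₃ f₃ ∧
  f₁ 0 = a ∧ f₂ 0 = a ∧ f₃ 0 = a ∧
  f₁ (Fin.last n₁) = b ∧ f₂ (Fin.last n₂) = b ∧ f₃ (Fin.last n₃) = b ∧
  1 ≤ n₁ ∧ 1 ≤ n₂ ∧ 1 ≤ n₃ ∧ a ≠ b ∧ ¬ G.Adj a b ∧
  ThetaNoCross G f₁ f₂ ∧ ThetaNoCross G f₁ f₃ ∧ ThetaNoCross G f₂ f₃

def IsThetaWithEnds (G : SimpleGraph V) (Q : Set V) (a b : V) : Prop :=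
  ∃ (n₁ n₂ n₃ : ℕ) (f₁ : Fin (n₁+1) → V) (f₂ : Fin (n₂+1) → V) (f₃ : Fin (n₃+1) → V),
    ThetaSpec G a b n₁ n₂ n₃ f₁ f₂ f₃ ∧
    Q = Set.range f₁ ∪ Set.range f₂ ∪ Set.range f₃

/-- A prism: two disjoint triangles joined by three disjoint induced paths with
no other edges between them. -/
def IsPrismOn (G : SimpleGraph V) (Q : Set V) : Prop :=
  ∃ (n₁ n₂ n₃ : ℕ) (f₁ : Fin (n₁+1) → V) (f₂ : Fin (n₂+1) → V) (f₃ : Fin (n₃+1) → V),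
    IsPathEmb G n₁ f₁ ∧ IsPathEmb G n₂ f₂ ∧ IsPathEmb G n₃ f₃ ∧
    1 ≤ n₁ ∧ 1 ≤ n₂ ∧ 1 ≤ n₃ ∧
    G.Adj (f₁ 0) (f₂ 0) ∧ G.Adj (f₂ 0) (f₃ 0) ∧ G.Adj (f₁ 0) (f₃ 0) ∧
    G.Adj (f₁ (Fin.last n₁)) (f₂ (Fin.last n₂)) ∧
    G.Adj (f₂ (Fin.last n₂)) (f₃ (Fin.last n₃)) ∧
    G.Adj (f₁ (Fin.last n₁)) (f₃ (Fin.last n₃)) ∧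
    PrismNoCross G f₁ f₂ ∧ PrismNoCross G f₁ f₃ ∧ PrismNoCross G f₂ f₃ ∧
    Q = Set.range f₁ ∪ Set.range f₂ ∪ Set.range f₃

/-- A three-path configuration: a theta, a prism, or a pyramid. -/
def IsThreePathConfig (G : SimpleGraph V) (Q : Set V) : Prop :=
  (∃ a b, IsThetaWithEnds G Q a b) ∨ IsPrismOn G Q ∨ (∃ a, IsPyramidWithApex G Q a)

/-- `D` is a connected component of the induced subgraph `G[S]`. -/
def IsComponentOf (G : SimpleGraph V) (S D : Set V) : Prop :=
  D.Nonempty ∧ D ⊆ S ∧ (G.induce D).Connected ∧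
    ∀ u ∈ D, ∀ v ∈ S, v ∉ D → ¬ G.Adj u v

/-- The weight of a set of vertices. -/
noncomputable def wSum [Fintype V] (w : V → ℝ) (S : Set V) : ℝ :=
  ∑ v, S.indicator w v

/-- A weight function: values in `[0,1]` summing to `1`. -/
def IsWeightFun [Fintype V] (w : V → ℝ) : Prop :=
  (∀ v, 0 ≤ w v ∧ w v ≤ 1) ∧ ∑ v, w v = 1

/-- `X` is a `(w,c)`-balanced separator: every component of `G \ X` has weight at most `c`. -/
def IsBalancedSep [Fintype V] (G : SimpleGraph V) (w : V → ℝ) (c : ℝ) (X : Set V) : Prop :=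
  ∀ D : Set V, IsComponentOf G (Xᶜ) D → wSum w D ≤ c

/-- `X` is a `(w,G)`-shield for `X'`, phrased via the heavy components `B`, `B'`
of the canonical separations. -/
def IsShield [Fintype V] (G : SimpleGraph V) (w : V → ℝ) (X X' : Set V) : Prop :=
  ∃ B B' : Set V,
    IsComponentOf G (Xᶜ) B ∧ 1/2 < wSum w B ∧
    IsComponentOf G (X'ᶜ) B' ∧ 1/2 < wSum w B' ∧
    ((B ∪ X ⊂ B' ∪ X') ∨ (B ∪ X = B' ∪ X' ∧ B' ⊂ B))

/-- The central bag `β(G,w,𝒳)`: the intersection of the sets `B ∪ C` over canonical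
separations `(A,C,B)` of members of `𝒳`. -/
def CentralBag [Fintype V] (G : SimpleGraph V) (w : V → ℝ) (𝓧 : Set (Set V)) : Set V :=
  {v | ∀ X ∈ 𝓧, ∀ B : Set V, IsComponentOf G (Xᶜ) B → 1/2 < wSum w B → v ∈ B ∪ X}

/-- Two separations `(A,C,B)` and `(A',C',B')` are loosely non-crossing: no path has
one end in `A ∩ C'`, the other in `A' ∩ C`, and interior in `A ∩ A'`. -/
def LooselyNonCrossing (G : SimpleGraph V) (A C A' C' : Set V) : Prop :=
  ¬ ∃ (u v : V) (p : G.Walk u v), p.IsPath ∧ u ∈ A ∩ C' ∧ v ∈ A' ∩ C ∧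
    ∀ x ∈ p.support, x ≠ u → x ≠ v → x ∈ A ∩ A'

/-- `G` has a tree decomposition of width at most `r`. -/
def HasTreeDecompOfWidthLE (G : SimpleGraph V) (r : ℝ) : Prop :=
  ∃ (ι : Type) (T : SimpleGraph ι) (τ : ι → Set V),
    T.IsTree ∧
    (∀ v : V, ∃ t, v ∈ τ t) ∧
    (∀ u v : V, G.Adj u v → ∃ t, u ∈ τ t ∧ v ∈ τ t) ∧
    (∀ v : V, (T.induce {t | v ∈ τ t}).Connected) ∧
    (∀ t, ((τ t).ncard : ℝ) - 1 ≤ r)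
lemma firstExit {G : SimpleGraph V} {S : Set V} {a b : V} (p : G.Walk a b) :
    a ∈ S → b ∉ S →
      ∃ (c : V) (q : G.Walk a c), c ∉ S ∧ (∀ x ∈ q.support, x ∈ p.support) ∧
        (∀ x ∈ q.support, x ≠ c → x ∈ S) := by
  induction p with
  | nil => exact fun ha hb => absurd ha hb
  | @cons a y b h q ih =>
    intro ha hb
    by_cases hy : y ∈ S
    · obtain ⟨c, r, hc, hsub, hS⟩ := ih hy hb
      refine ⟨c, Walk.cons h r, hc, ?_, ?_⟩
      · intro x hx
        rw [Walk.support_cons, List.mem_cons] at hx ⊢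
        rcases hx with rfl | hx
        · exact Or.inl rfl
        · exact Or.inr (hsub x hx)
      · intro x hx hxc
        rw [Walk.support_cons, List.mem_cons] at hx
        rcases hx with rfl | hx
        · exact ha
        · exact hS x hx hxc
    · refine ⟨y, Walk.cons h Walk.nil, hy, ?_, ?_⟩
      · intro x hx
        rw [Walk.support_cons, List.mem_cons] at hx ⊢
        rcases hx with rfl | hx
        · exact Or.inl rfl
        · simp only [Walk.support_nil, List.mem_singleton] at hx
          subst hx
          exact Or.inr q.start_mem_support
      · intro x hx hxc
        rw [Walk.support_cons, List.mem_cons] at hx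
        rcases hx with rfl | hx
        · exact ha
        · simp only [Walk.support_nil, List.mem_singleton] at hx
          exact absurd hx hxc

lemma exitEdge {G : SimpleGraph V} {S : Set V} {a b : V} (p : G.Walk a b) :
    a ∈ S → b ∉ S →
      ∃ u v, u ∈ S ∧ v ∉ S ∧ G.Adj u v ∧ v ∈ p.support := by
  induction p with
  | nil => exact fun ha hb => absurd ha hb
  | @cons a y b h q ih =>
    intro ha hb
    by_cases hy : y ∈ S
    · obtain ⟨u, v, h1, h2, h3, h4⟩ := ih hy hb
      refine ⟨u, v, h1, h2, h3, ?_⟩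
      rw [Walk.support_cons, List.mem_cons]
      exact Or.inr h4
    · refine ⟨a, y, ha, hy, h, ?_⟩
      rw [Walk.support_cons, List.mem_cons]
      exact Or.inr q.start_mem_support

lemma walk_of_induce {G : SimpleGraph V} {s : Set V} (h : (G.induce s).Connected)
    {a b : V} (ha : a ∈ s) (hb : b ∈ s) :
    ∃ p : G.Walk a b, ∀ x ∈ p.support, x ∈ s := by
  obtain ⟨q⟩ := h.preconnected ⟨a, ha⟩ ⟨b, hb⟩
  refine ⟨q.map ⟨Subtype.val, fun hxy => hxy⟩, ?_⟩
  intro x hx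
  rw [Walk.support_map, List.mem_map] at hx
  obtain ⟨⟨y, hy⟩, _, rfl⟩ := hx
  exact hy

lemma secondVertex {G : SimpleGraph V} {a b : V} (p : G.Walk a b) (hp : p.IsPath)
    (hne : a ≠ b) : ∃ y, G.Adj a y ∧ y ∈ p.support ∧ y ≠ a := by
  cases p with
  | nil => exact absurd rfl hne
  | cons h q =>
    refine ⟨_, h, ?_, ?_⟩
    · rw [Walk.support_cons]
      exact List.mem_cons_of_mem _ q.start_mem_support
    · intro he
      rw [Walk.cons_isPath_iff] at hp
      exact hp.2 (he ▸ q.start_mem_support)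

lemma walkconn_insert {G : SimpleGraph V} {K : Set V} {u v : V}
    (hc : ∀ a ∈ K, ∀ b ∈ K, ∃ p : G.Walk a b, ∀ x ∈ p.support, x ∈ K)
    (hu : u ∈ K) (hadj : G.Adj u v) :
    ∀ a ∈ insert v K, ∀ b ∈ insert v K, ∃ p : G.Walk a b, ∀ x ∈ p.support, x ∈ insert v K := by
  have key : ∀ a ∈ K, ∃ p : G.Walk a v, ∀ x ∈ p.support, x ∈ insert v K := by
    intro a ha
    obtain ⟨p, hp⟩ := hc a ha u hu
    refine ⟨p.append (Walk.cons hadj Walk.nil), ?_⟩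
    intro x hx
    rw [Walk.mem_support_append_iff] at hx
    rcases hx with hx | hx
    · exact Set.mem_insert_of_mem _ (hp x hx)
    · rw [Walk.support_cons, List.mem_cons] at hx
      rcases hx with rfl | hx
      · exact Set.mem_insert_of_mem _ hu
      · simp only [Walk.support_nil, List.mem_singleton] at hx
        subst hx
        exact Set.mem_insert _ _
  intro a ha b hb
  rcases Set.mem_insert_iff.1 ha with rfl | ha'
  · rcases Set.mem_insert_iff.1 hb with rfl | hb'
    · exact ⟨Walk.nil, by simp⟩
    · obtain ⟨p, hp⟩ := key b hb'
      exact ⟨p.reverse, fun x hx => hp x (by rwa [Walk.support_reverse, List.mem_reverse] at hx)⟩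
  · rcases Set.mem_insert_iff.1 hb with rfl | hb'
    · exact key a ha'
    · obtain ⟨p, hp⟩ := hc a ha' b hb'
      exact ⟨p, fun x hx => Set.mem_insert_of_mem _ (hp x hx)⟩


/-- Lemma 5.3: if the canonical separations of the members of `𝒳` are pairwise
loosely non-crossing, then every component of `G \ β(G,w,𝒳)` is contained in the
`A`-side of the canonical separation of some `X ∈ 𝒳`. -/
theorem central_bag_components [Fintype V] (G : SimpleGraph V)
    (w : V → ℝ) (hw : IsWeightFun w) (𝓧 : Set (Set V))
    (h𝓧 : ∀ X ∈ 𝓧, ¬ IsBalancedSep G w (1/2) X)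
    (hcross : ∀ X ∈ 𝓧, ∀ X' ∈ 𝓧, ∀ B B' : Set V,
      IsComponentOf G (Xᶜ) B → 1/2 < wSum w B →
      IsComponentOf G (X'ᶜ) B' → 1/2 < wSum w B' →
      LooselyNonCrossing G ((B ∪ X)ᶜ) X ((B' ∪ X')ᶜ) X')
    (D : Set V) (hD : IsComponentOf G ((CentralBag G w 𝓧)ᶜ) D) :
    ∃ X ∈ 𝓧, ∃ B : Set V, IsComponentOf G (Xᶜ) B ∧ 1/2 < wSum w B ∧
      D ⊆ (B ∪ X)ᶜ := by
  classical
  obtain ⟨hDne, hDsub, hDconn, -⟩ := hD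
  -- every vertex of D escapes some canonical separation
  have hesc : ∀ d ∈ D, ∃ X ∈ 𝓧, ∃ B : Set V,
      IsComponentOf G (Xᶜ) B ∧ 1/2 < wSum w B ∧ d ∉ B ∪ X := by
    intro d hd
    have hdc := hDsub hd
    simp only [Set.mem_compl_iff, CentralBag, Set.mem_setOf_eq] at hdc
    push_neg at hdc
    exact hdc
  -- candidate family
  set 𝒯 : Set (Set V) := {K | K.Nonempty ∧
      (∀ a ∈ K, ∀ b ∈ K, ∃ p : G.Walk a b, ∀ x ∈ p.support, x ∈ K) ∧
      ∃ X ∈ 𝓧, ∃ B : Set V, IsComponentOf G (Xᶜ) B ∧ 1/2 < wSum w B ∧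
        K ⊆ D ∧ K ⊆ (B ∪ X)ᶜ} with h𝒯
  have h𝒯ne : 𝒯.Nonempty := by
    obtain ⟨d, hd⟩ := hDne
    obtain ⟨X, hX, B, hB, hBw, hdA⟩ := hesc d hd
    refine ⟨{d}, ⟨d, rfl⟩, ?_, X, hX, B, hB, hBw, ?_, ?_⟩
    · rintro a rfl b rfl
      exact ⟨Walk.nil, by simp⟩
    · rintro x rfl; exact hd
    · rintro x rfl; exact hdA
  obtain ⟨K, hK𝒯, hKmax0⟩ :=
    Set.Finite.exists_maximalFor Set.ncard 𝒯 (Set.toFinite 𝒯) h𝒯ne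
  have hKmax : ∀ K' ∈ 𝒯, K'.ncard ≤ K.ncard := by
    intro K' hK'
    by_contra hlt
    push_neg at hlt
    exact absurd (hKmax0 hK' hlt.le) (by omega)
  obtain ⟨hKne, hKconn, X, hX, B, hB, hBw, hKD, hKA⟩ := hK𝒯
  refine ⟨X, hX, B, hB, hBw, ?_⟩
  -- it suffices that D ⊆ K
  suffices hDK : D ⊆ K by exact fun z hz => hKA (hDK hz)
  by_contra hne
  rw [Set.not_subset] at hne
  obtain ⟨z, hzD, hzK⟩ := hne
  obtain ⟨k, hk⟩ := hKne
  obtain ⟨p, hpD⟩ := walk_of_induce hDconn (hKD hk) hzD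
  obtain ⟨u, v, huK, hvK, huv, hvsupp⟩ := exitEdge p hk hzK
  have hvD : v ∈ D := hpD v hvsupp
  -- the grow-a-bigger-set trick
  have grow : ∀ X' ∈ 𝓧, ∀ B' : Set V, IsComponentOf G (X'ᶜ) B' → 1/2 < wSum w B' →
      insert v K ⊆ (B' ∪ X')ᶜ → False := by
    intro X' hX' B' hB' hB'w hsub
    have : insert v K ∈ 𝒯 := by
      refine ⟨⟨v, Set.mem_insert _ _⟩, walkconn_insert hKconn huK huv, X', hX', B', hB', hB'w,
        ?_, hsub⟩
      intro x hx
      rcases Set.mem_insert_iff.1 hx with rfl | hx'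
      · exact hvD
      · exact hKD hx'
    have hcard := hKmax _ this
    rw [Set.ncard_insert_of_notMem hvK (Set.toFinite K)] at hcard
    omega
  -- v is not in A = (B ∪ X)ᶜ
  have hvA : v ∉ (B ∪ X)ᶜ := by
    intro hvA
    refine grow X hX B hB hBw ?_
    intro x hx
    rcases Set.mem_insert_iff.1 hx with rfl | hx'
    · exact hvA
    · exact hKA hx'
  -- hence v ∈ X
  have hvBX : v ∈ B ∪ X := Set.not_notMem.1 hvA
  have huA : u ∈ (B ∪ X)ᶜ := hKA huK
  have huX : u ∉ X := fun h => huA (Or.inr h)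
  have huB : u ∉ B := fun h => huA (Or.inl h)
  have hvX : v ∈ X := by
    rcases hvBX with hvB | hvX
    · exact absurd huv.symm (hB.2.2.2 v hvB u huX huB)
    · exact hvX
  -- v escapes some other separation
  obtain ⟨X', hX', B', hB', hB'w, hvA'⟩ := hesc v hvD
  -- K cannot be inside A' either
  have hKnotA' : ∃ x ∈ K, x ∈ B' ∪ X' := by
    by_contra hcon
    push_neg at hcon
    refine grow X' hX' B' hB' hB'w ?_
    intro x hx
    rcases Set.mem_insert_iff.1 hx with rfl | hx'
    · exact hvA'
    · exact hcon x hx'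
  obtain ⟨x, hxK, hxA'⟩ := hKnotA'
  -- a walk from x to v inside K ∪ {v}
  obtain ⟨p₁, hp₁⟩ := walkconn_insert hKconn huK huv x (Set.mem_insert_of_mem _ hxK)
    v (Set.mem_insert _ _)
  -- first exit of the reversed walk out of A' = (B' ∪ X')ᶜ
  have hvA'mem : v ∈ (B' ∪ X')ᶜ := hvA'
  have hxA'mem : x ∉ (B' ∪ X')ᶜ := fun h => h hxA'
  obtain ⟨c, q, hc, hqsub, hqS⟩ := firstExit p₁.reverse hvA'mem hxA'mem
  have hqsub' : ∀ y ∈ q.support, y ∈ insert v K := by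
    intro y hy
    have := hqsub y hy
    rw [Walk.support_reverse, List.mem_reverse] at this
    exact hp₁ y this
  have hcv : c ≠ v := fun h => hc (h ▸ hvA'mem)
  have hcK : c ∈ K := by
    rcases Set.mem_insert_iff.1 (hqsub' c q.end_mem_support) with h | h
    · exact absurd h hcv
    · exact h
  -- the path witnessing crossing
  set r : G.Walk c v := q.reverse.bypass with hr
  have hrpath : r.IsPath := Walk.bypass_isPath _
  have hrsub : ∀ y ∈ r.support, y ∈ q.support := by
    intro y hy
    have := Walk.support_bypass_subset _ hy
    rwa [Walk.support_reverse, List.mem_reverse] at this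
  -- c ∈ X'
  have hcBX' : c ∈ B' ∪ X' := Set.not_notMem.1 hc
  obtain ⟨y, hcy, hysupp, hyc⟩ := secondVertex r hrpath hcv
  have hyA' : y ∈ (B' ∪ X')ᶜ := hqS y (hrsub y hysupp) hyc
  have hyX' : y ∉ X' := fun h => hyA' (Or.inr h)
  have hyB' : y ∉ B' := fun h => hyA' (Or.inl h)
  have hcX' : c ∈ X' := by
    rcases hcBX' with hcB' | hcX'
    · exact absurd hcy (hB'.2.2.2 c hcB' y hyX' hyB')
    · exact hcX'
  -- contradiction with loose non-crossing
  refine hcross X hX X' hX' B B' hB hBw hB' hB'w ⟨c, v, r, hrpath, ⟨hKA hcK, hcX'⟩,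
    ⟨hvA'mem, hvX⟩, ?_⟩
  intro t ht htc htv
  have htK : t ∈ K := by
    rcases Set.mem_insert_iff.1 (hqsub' t (hrsub t ht)) with h | h
    · exact absurd h htv
    · exact h
  exact ⟨hKA htK, hqS t (hrsub t ht) htc⟩
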